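/- Let n be an odd positive integer, let d be a divisor of n with n dividing d², and let ℓ be an integer with ℓ² ≡ 1 (mod d²/n). Then there exists an integer ℓ₀ with 1 ≤ ℓ₀ ≤ n, ℓ₀ ≡ ℓ (mod d²/n), and ℓ₀² ≡ 1 (mod n). -/

import Mathlib

/-- Integer CRT for coprime natural moduli. -/
private lemma crt_int (a b : ℕ) (h : Nat.Coprime a b) (x₁ x₂ : ℤ) :
    ∃ x : ℤ, (a : ℤ) ∣ x - x₁ ∧ (b : ℤ) ∣ x - x₂ := by
  have hco : IsCoprime (a : ℤ) (b : ℤ) := by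
    exact Nat.isCoprime_iff_coprime.mpr h
  obtain ⟨u, v, huv⟩ := hco
  exact ⟨x₂ * (u * a) + x₁ * (v * b), ⟨(x₂ - x₁) * u, by linear_combination x₁ * huv⟩,
    ⟨(x₁ - x₂) * v, by linear_combination x₂ * huv⟩⟩

private lemma key : ∀ n : ℕ, Odd n → ∀ m : ℕ, m ∣ n → ∀ ℓ : ℤ,
    (m : ℤ) ∣ ℓ ^ 2 - 1 → ∃ x : ℤ, (m : ℤ) ∣ x - ℓ ∧ (n : ℤ) ∣ x ^ 2 - 1 := by
  intro n
  induction n using Nat.strong_induction_on with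
  | _ n ih =>
    intro hodd m hmn ℓ hl
    have hn0 : n ≠ 0 := by rintro rfl; simp at hodd
    rcases eq_or_ne n 1 with rfl | hn1
    · exact ⟨ℓ, by simp, by simp⟩
    set p := n.minFac with hp_def
    have hp : p.Prime := Nat.minFac_prime hn1
    have hpn : p ∣ n := Nat.minFac_dvd n
    have hp2 : p ≠ 2 := fun h =>
      ((Nat.not_even_iff_odd.mpr hodd)) (even_iff_two_dvd.mpr (h ▸ hpn))
    have hpodd : ¬ ((p:ℤ) ∣ 2) := by
      rw [show ((2:ℤ)) = ((2:ℕ):ℤ) by norm_num, Int.natCast_dvd_natCast]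
      exact fun h => hp2 ((Nat.prime_dvd_prime_iff_eq hp Nat.prime_two).mp h)
    set a := n.factorization p with ha_def
    set n' := n / p ^ a with hn'_def
    have ha0 : 0 < a := hp.factorization_pos_of_dvd hn0 hpn
    have heq : p ^ a * n' = n := Nat.ordProj_mul_ordCompl_eq_self n p
    have hco : Nat.Coprime (p ^ a) n' := (Nat.coprime_ordCompl hp hn0).pow_left a
    have hn'0 : 0 < n' := Nat.pos_of_ne_zero (by rintro h; rw [h, mul_zero] at heq; exact hn0 heq.symm)
    have hpa1 : 1 < p ^ a := Nat.one_lt_pow (by omega) hp.one_lt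
    have hlt : n' < n := by
      calc n' = 1 * n' := (one_mul n').symm
      _ < p ^ a * n' := (Nat.mul_lt_mul_right hn'0).mpr hpa1
      _ = n := heq
    set m₁ := m.gcd (p ^ a) with hm1_def
    set m₂ := m.gcd n' with hm2_def
    have hm1pa : m₁ ∣ p ^ a := Nat.gcd_dvd_right _ _
    have hm2n' : m₂ ∣ n' := Nat.gcd_dvd_right _ _
    have hm12co : Nat.Coprime m₁ m₂ :=
      Nat.Coprime.coprime_dvd_left hm1pa (Nat.Coprime.coprime_dvd_right hm2n' hco)
    have hm1 : m₁ ∣ m := Nat.gcd_dvd_left _ _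
    have hm2 : m₂ ∣ m := Nat.gcd_dvd_left _ _
    have hmeq : m = m₁ * m₂ := by
      have h1 : m ∣ m₁ * m₂ := by
        have := Nat.gcd_mul_right_dvd_mul_gcd m (p ^ a) n'
        rwa [heq, Nat.gcd_eq_left hmn] at this
      exact Nat.dvd_antisymm h1 (hm12co.mul_dvd_of_dvd_of_dvd hm1 hm2)
    obtain ⟨c, hca, hc⟩ := (Nat.dvd_prime_pow hp).mp hm1pa
    have hfac : ((p:ℤ) ^ c) ∣ (ℓ - 1) * (ℓ + 1) := by
      have h : (m₁ : ℤ) ∣ ℓ ^ 2 - 1 := dvd_trans (Int.natCast_dvd_natCast.mpr hm1) hl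
      rw [hc] at h
      push_cast at h
      convert h using 1; ring
    have hpZ : Prime ((p : ℤ)) := Nat.prime_iff_prime_int.mp hp
    have hsign : ∃ ε : ℤ, ε ^ 2 = 1 ∧ (m₁ : ℤ) ∣ ε - ℓ := by
      by_cases h1 : (p : ℤ) ∣ ℓ - 1
      · refine ⟨1, one_pow 2, ?_⟩
        have h2 : ¬ (p : ℤ) ∣ ℓ + 1 := fun h => hpodd (by
          have := dvd_sub h h1; simpa using this)
        have hcop : IsCoprime ((p:ℤ) ^ c) (ℓ + 1) :=
          ((hpZ.coprime_iff_not_dvd).mpr h2).pow_left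
        have hd1 : ((p:ℤ) ^ c) ∣ ℓ - 1 := hcop.dvd_of_dvd_mul_right hfac
        rw [hc]; push_cast
        have := dvd_neg.mpr hd1
        simpa [neg_sub] using this
      · refine ⟨-1, by ring, ?_⟩
        have hcop : IsCoprime ((p:ℤ) ^ c) (ℓ - 1) :=
          ((hpZ.coprime_iff_not_dvd).mpr h1).pow_left
        have hd1 : ((p:ℤ) ^ c) ∣ ℓ + 1 := hcop.dvd_of_dvd_mul_left hfac
        rw [hc]; push_cast
        have := dvd_neg.mpr hd1
        have heq2 : -(ℓ + 1) = -1 - ℓ := by ring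
        rwa [heq2] at this
    obtain ⟨ε, hε2, hεℓ⟩ := hsign
    have hn'odd : Odd n' := hodd.of_dvd_nat ⟨p ^ a, by rw [mul_comm]; exact heq.symm⟩
    have hm2l : (m₂ : ℤ) ∣ ℓ ^ 2 - 1 := dvd_trans (Int.natCast_dvd_natCast.mpr hm2) hl
    obtain ⟨x₂, hx₂m, hx₂n⟩ := ih n' hlt hn'odd m₂ hm2n' ℓ hm2l
    obtain ⟨x, hxa, hxn'⟩ := crt_int (p ^ a) n' hco ε x₂
    refine ⟨x, ?_, ?_⟩
    · rw [hmeq]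
      have hm12coZ : IsCoprime (m₁ : ℤ) (m₂ : ℤ) := by
        exact Nat.isCoprime_iff_coprime.mpr hm12co
      have h1 : (m₁ : ℤ) ∣ x - ℓ := by
        have hxε : (m₁ : ℤ) ∣ x - ε := by
          refine dvd_trans ?_ hxa
          rw [hc]; push_cast; exact pow_dvd_pow _ hca
        have h := dvd_add hxε hεℓ
        rwa [sub_add_sub_cancel] at h
      have h2 : (m₂ : ℤ) ∣ x - ℓ := by
        have hxx2 : (m₂ : ℤ) ∣ x - x₂ := dvd_trans (Int.natCast_dvd_natCast.mpr hm2n') hxn'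
        have h := dvd_add hxx2 hx₂m
        rwa [sub_add_sub_cancel] at h
      push_cast
      exact hm12coZ.mul_dvd h1 h2
    · rw [← heq]
      have hcoZ : IsCoprime ((p ^ a : ℕ) : ℤ) ((n' : ℕ) : ℤ) := by
        exact Nat.isCoprime_iff_coprime.mpr hco
      have h1 : ((p ^ a : ℕ) : ℤ) ∣ x ^ 2 - 1 := by
        obtain ⟨k, hk⟩ := hxa
        exact ⟨k * (x + ε), by linear_combination (x + ε) * hk + hε2⟩
      have h2 : ((n' : ℕ) : ℤ) ∣ x ^ 2 - 1 := by
        obtain ⟨k, hk⟩ := hxn'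
        obtain ⟨j, hj⟩ := hx₂n
        exact ⟨k * (x + x₂) + j, by linear_combination (x + x₂) * hk + hj⟩
      exact_mod_cast hcoZ.mul_dvd h1 h2

/-- Lifting a square root of 1 mod `d²/n` to one mod `n` in the same class mod `d²/n`. -/
theorem lift_sqrt_one (n d : ℕ) (hodd : Odd n) (hpos : 0 < n)
    (hd : d ∣ n) (hnd : n ∣ d ^ 2) (ℓ : ℤ)
    (hl : ℓ ^ 2 ≡ 1 [ZMOD ((d ^ 2 / n : ℕ) : ℤ)]) :
    ∃ ℓ₀ : ℤ, 1 ≤ ℓ₀ ∧ ℓ₀ ≤ (n : ℤ) ∧ ℓ₀ ≡ ℓ [ZMOD ((d ^ 2 / n : ℕ) : ℤ)] ∧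
      ℓ₀ ^ 2 ≡ 1 [ZMOD (n : ℤ)] := by
  set m := d ^ 2 / n with hm_def
  have hmn : m ∣ n := by
    have h1 : m * n = d ^ 2 := Nat.div_mul_cancel hnd
    have h3 : m * n ∣ d * n := by
      rw [h1, pow_two]; exact mul_dvd_mul_left d hd
    exact (Nat.dvd_of_mul_dvd_mul_right hpos h3).trans hd
  have hl' : (m : ℤ) ∣ ℓ ^ 2 - 1 := by
    have h := Int.modEq_iff_dvd.mp hl
    have := dvd_neg.mpr h
    simpa [neg_sub] using this
  obtain ⟨x, hxm, hxn⟩ := key n hodd m hmn ℓ hl'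
  have hnZ0 : (n : ℤ) ≠ 0 := by exact_mod_cast hpos.ne'
  have hnZpos : (0 : ℤ) < n := by exact_mod_cast hpos
  refine ⟨(x - 1) % n + 1, ?_, ?_, ?_, ?_⟩
  · have := Int.emod_nonneg (x - 1) hnZ0
    linarith
  · have := Int.emod_lt_of_pos (x - 1) hnZpos
    linarith
  · have hmod : (x - 1) % n + 1 ≡ x [ZMOD (n : ℤ)] := by
      have : (x - 1) % n ≡ x - 1 [ZMOD (n : ℤ)] := Int.emod_emod (x-1) n
      calc (x - 1) % n + 1 ≡ (x - 1) + 1 [ZMOD (n:ℤ)] := this.add_right 1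
        _ = x := by ring
    have hmodm : (x - 1) % n + 1 ≡ x [ZMOD (m : ℤ)] :=
      hmod.of_dvd (Int.natCast_dvd_natCast.mpr hmn)
    have hxl : x ≡ ℓ [ZMOD (m : ℤ)] := by
      rw [Int.modEq_iff_dvd]
      have := dvd_neg.mpr hxm
      simpa [neg_sub] using this
    exact hmodm.trans hxl
  · have hmod : (x - 1) % n + 1 ≡ x [ZMOD (n : ℤ)] := by
      have : (x - 1) % n ≡ x - 1 [ZMOD (n : ℤ)] := Int.emod_emod (x-1) n
      calc (x - 1) % n + 1 ≡ (x - 1) + 1 [ZMOD (n:ℤ)] := this.add_right 1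
        _ = x := by ring
    have hx1 : x ^ 2 ≡ 1 [ZMOD (n : ℤ)] := by
      rw [Int.modEq_iff_dvd]
      have := dvd_neg.mpr hxn
      simpa [neg_sub] using this
    exact (hmod.pow 2).trans hx1
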